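/- Let L be a right Leibniz algebra, d a derivation of L and D an anti-derivation of L. Then the commutator D∘d − d∘D is again an anti-derivation of L. (Thus the space of anti-derivations is a module over the Lie algebra Der(L).) -/
import Mathlib

/-- if `d` is a derivation and `D` an anti-derivation, then
`D∘d − d∘D` is an anti-derivation. -/
theorem commutator_antiderivation
    {F : Type*} [Field F] {L : Type*} [AddCommGroup L] [Module F L]
    (br : L →ₗ[F] L →ₗ[F] L)
    (hleib : ∀ x y z : L, br (br x y) z = br (br x z) y + br x (br y z))
    (d D : L →ₗ[F] L)
    (hd : ∀ x y : L, d (br x y) = br (d x) y + br x (d y))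
    (hD : ∀ x y : L, D (br x y) = br (D x) y - br (D y) x) :
    ∀ x y : L, (D ∘ₗ d - d ∘ₗ D) (br x y) =
      br ((D ∘ₗ d - d ∘ₗ D) x) y - br ((D ∘ₗ d - d ∘ₗ D) y) x := by
  intro x y
  simp only [LinearMap.sub_apply, LinearMap.comp_apply, hd, hD, map_add, map_sub,
    LinearMap.map_sub₂, LinearMap.map_add₂]
  abel
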